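/- Let (Ω, F, P) be a probability space with a filtration F_0 ⊆ F_1 ⊆ … ⊆ F_{K+1} ⊆ F, and for l = 0,…,K let L¹_l and L²_l be nonnegative integrable random variables that are F_{l+1}-measurable and satisfy E(L¹_l | F_l) = 1 and E(L²_l | F_l) = 1 almost surely. Then E[(√(∏_{l=0}^{K} L¹_l) − √(∏_{l=0}^{K} L²_l))²] ≤ ∑_{l=0}^{K} ess sup E[(√(L¹_l) − √(L²_l))² | F_l]. -/

import Mathlib

open MeasureTheory Real Filter

lemma my_sqrt_prod (s : Finset ℕ) (f : ℕ → ℝ) (h : ∀ i ∈ s, 0 ≤ f i) :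
    Real.sqrt (∏ i ∈ s, f i) = ∏ i ∈ s, Real.sqrt (f i) := by
  induction s using Finset.cons_induction with
  | empty => simp
  | cons a s ha ih =>
    rw [Finset.prod_cons, Finset.prod_cons,
      Real.sqrt_mul (h a (Finset.mem_cons_self a s)),
      ih (fun i hi => h i (Finset.mem_cons_of_mem hi))]

lemma my_mul_le {Ω : Type*} {mΩ : MeasurableSpace Ω} {P : Measure Ω} [IsProbabilityMeasure P]
    {m : MeasurableSpace Ω} (hm : m ≤ mΩ)
    {f g : Ω → ℝ} (hf0 : ∀ ω, 0 ≤ f ω) (hfm : StronglyMeasurable[m] f)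
    (hfi : Integrable f P) (hg0 : ∀ ω, 0 ≤ g ω) (hgi : Integrable g P)
    {c : ℝ} (hbd : P[g|m] ≤ᵐ[P] fun _ => c) :
    Integrable (fun ω => f ω * g ω) P ∧ ∫ ω, f ω * g ω ∂P ≤ c * ∫ ω, f ω ∂P := by
  have hc : 0 ≤ c := by
    have h0 : 0 ≤ᵐ[P] P[g|m] := condExp_nonneg (Filter.Eventually.of_forall hg0)
    obtain ⟨ω, h1, h2⟩ := (h0.and hbd).exists
    exact le_trans h1 h2
  set fn : ℕ → Ω → ℝ := fun n ω => min (f ω) n with hfn_def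
  have hfn0 : ∀ n ω, 0 ≤ fn n ω := fun n ω => le_min (hf0 ω) (Nat.cast_nonneg n)
  have hfnle : ∀ n ω, fn n ω ≤ f ω := fun n ω => min_le_left _ _
  have hfnm : ∀ n, StronglyMeasurable[m] (fn n) := fun n =>
    hfm.inf (stronglyMeasurable_const : StronglyMeasurable[m] fun _ => (n : ℝ))
  have hfni : ∀ n, Integrable (fn n) P := fun n =>
    hfi.mono ((hfnm n).mono hm).aestronglyMeasurable
      (Filter.Eventually.of_forall fun ω => by
        rw [Real.norm_eq_abs, Real.norm_eq_abs, abs_of_nonneg (hfn0 n ω),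
          abs_of_nonneg (hf0 ω)]
        exact hfnle n ω)
  have hfngi : ∀ n, Integrable (fn n * g) P := fun n =>
    (hgi.const_mul (n : ℝ)).mono
      ((((hfnm n).mono hm).aestronglyMeasurable).mul hgi.1)
      (Filter.Eventually.of_forall fun ω => by
        simp only [Pi.mul_apply, Real.norm_eq_abs]
        rw [abs_of_nonneg (mul_nonneg (hfn0 n ω) (hg0 ω))]
        calc fn n ω * g ω ≤ (n : ℝ) * g ω :=
              mul_le_mul_of_nonneg_right (min_le_right _ _) (hg0 ω)
          _ ≤ |(n : ℝ) * g ω| := le_abs_self _)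
  have hpull : ∀ n, P[fn n * g|m] =ᵐ[P] fn n * P[g|m] := fun n =>
    condExp_mul_of_stronglyMeasurable_left (hfnm n) (hfngi n) hgi
  have hcondint : ∀ n, Integrable (fn n * P[g|m]) P := fun n =>
    (integrable_condExp (f := fn n * g)).congr (hpull n)
  have hkey : ∀ n, ∫ ω, fn n ω * g ω ∂P ≤ c * ∫ ω, f ω ∂P := by
    intro n
    have h1 : ∫ ω, (fn n * g) ω ∂P = ∫ ω, (P[fn n * g|m]) ω ∂P :=
      (integral_condExp hm).symm
    have h2 : ∫ ω, (P[fn n * g|m]) ω ∂P = ∫ ω, (fn n * P[g|m]) ω ∂P :=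
      integral_congr_ae (hpull n)
    have h3 : ∫ ω, (fn n * P[g|m]) ω ∂P ≤ ∫ ω, c * fn n ω ∂P := by
      refine integral_mono_ae (hcondint n) ((hfni n).const_mul c) ?_
      filter_upwards [hbd] with ω hω
      simp only [Pi.mul_apply]
      calc fn n ω * (P[g|m]) ω ≤ fn n ω * c :=
            mul_le_mul_of_nonneg_left hω (hfn0 n ω)
        _ = c * fn n ω := mul_comm _ _
    have h4 : ∫ ω, c * fn n ω ∂P = c * ∫ ω, fn n ω ∂P := integral_const_mul c _
    have h5 : ∫ ω, fn n ω ∂P ≤ ∫ ω, f ω ∂P :=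
      integral_mono (hfni n) hfi (fun ω => hfnle n ω)
    calc ∫ ω, fn n ω * g ω ∂P = ∫ ω, (fn n * g) ω ∂P := rfl
      _ ≤ ∫ ω, c * fn n ω ∂P := by rw [h1, h2]; exact h3
      _ = c * ∫ ω, fn n ω ∂P := h4
      _ ≤ c * ∫ ω, f ω ∂P := mul_le_mul_of_nonneg_left h5 hc
  have hmono : ∀ ω, Monotone fun n : ℕ => fn n ω * g ω := fun ω i j hij =>
    mul_le_mul_of_nonneg_right (min_le_min le_rfl (Nat.cast_le.2 hij)) (hg0 ω)
  have htend : ∀ ω, Tendsto (fun n : ℕ => fn n ω * g ω) atTop (nhds (f ω * g ω)) := by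
    intro ω
    refine tendsto_atTop_of_eventually_const (i₀ := ⌈f ω⌉₊) fun n hn => ?_
    have : fn n ω = f ω := min_eq_left ((Nat.le_ceil (f ω)).trans (Nat.cast_le.2 hn))
    rw [this]
  have hintfg : Integrable (fun ω => f ω * g ω) P := by
    have hmeas : AEStronglyMeasurable[mΩ] (fun ω => f ω * g ω) P :=
      ((hfm.mono hm).aestronglyMeasurable).mul hgi.1
    have hlim : Tendsto (fun n => ∫⁻ ω, ENNReal.ofReal (fn n ω * g ω) ∂P) atTop
        (nhds (∫⁻ ω, ENNReal.ofReal (f ω * g ω) ∂P)) := by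
      refine lintegral_tendsto_of_tendsto_of_monotone
        (fun n => ((hfngi n).1.aemeasurable.ennreal_ofReal))
        (Filter.Eventually.of_forall fun ω i j hij =>
          ENNReal.ofReal_le_ofReal (hmono ω hij)) ?_
      exact Filter.Eventually.of_forall fun ω =>
        (ENNReal.continuous_ofReal.tendsto _).comp (htend ω)
    have hbd2 : ∀ n, ∫⁻ ω, ENNReal.ofReal (fn n ω * g ω) ∂P
        ≤ ENNReal.ofReal (c * ∫ ω, f ω ∂P) := by
      intro n
      have hint' : Integrable (fun ω => fn n ω * g ω) P := hfngi n
      rw [← ofReal_integral_eq_lintegral_ofReal hint'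
        (Filter.Eventually.of_forall fun ω => mul_nonneg (hfn0 n ω) (hg0 ω))]
      exact ENNReal.ofReal_le_ofReal (hkey n)
    have hfin : ∫⁻ ω, ENNReal.ofReal (f ω * g ω) ∂P ≤ ENNReal.ofReal (c * ∫ ω, f ω ∂P) :=
      le_of_tendsto' hlim hbd2
    refine ⟨hmeas, ?_⟩
    rw [hasFiniteIntegral_iff_ofReal
      (Filter.Eventually.of_forall fun ω => mul_nonneg (hf0 ω) (hg0 ω))]
    exact lt_of_le_of_lt hfin ENNReal.ofReal_lt_top
  refine ⟨hintfg, ?_⟩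
  have hlim2 : Tendsto (fun n => ∫ ω, fn n ω * g ω ∂P) atTop
      (nhds (∫ ω, f ω * g ω ∂P)) := by
    refine integral_tendsto_of_tendsto_of_monotone (fun n => hfngi n) hintfg
      (Filter.Eventually.of_forall hmono) (Filter.Eventually.of_forall htend)
  exact le_of_tendsto' hlim2 hkey

lemma my_mul_ge {Ω : Type*} {mΩ : MeasurableSpace Ω} {P : Measure Ω} [IsProbabilityMeasure P]
    {m : MeasurableSpace Ω} (hm : m ≤ mΩ)
    {f g : Ω → ℝ} (hf0 : ∀ ω, 0 ≤ f ω) (hfm : StronglyMeasurable[m] f)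
    (hfi : Integrable f P) (hgi : Integrable g P)
    (hfg : Integrable (fun ω => f ω * g ω) P)
    {c : ℝ} (hbd : (fun _ => c) ≤ᵐ[P] P[g|m]) :
    c * ∫ ω, f ω ∂P ≤ ∫ ω, f ω * g ω ∂P := by
  have hpull : P[f * g|m] =ᵐ[P] f * P[g|m] :=
    condExp_mul_of_stronglyMeasurable_left hfm hfg hgi
  have hcondint : Integrable (f * P[g|m]) P :=
    (integrable_condExp (f := f * g)).congr hpull
  calc c * ∫ ω, f ω ∂P = ∫ ω, c * f ω ∂P := (integral_const_mul c f).symm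
    _ ≤ ∫ ω, (f * P[g|m]) ω ∂P := by
        refine integral_mono_ae (hfi.const_mul c) hcondint ?_
        filter_upwards [hbd] with ω hω
        simp only [Pi.mul_apply]
        calc c * f ω = f ω * c := mul_comm _ _
          _ ≤ f ω * (P[g|m]) ω := mul_le_mul_of_nonneg_left hω (hf0 ω)
    _ = ∫ ω, (P[f * g|m]) ω ∂P := (integral_congr_ae hpull).symm
    _ = ∫ ω, (f * g) ω ∂P := integral_condExp hm
    _ = ∫ ω, f ω * g ω ∂P := rfl

/-- Hellinger-distance bound for products of conditional likelihood ratios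
(Lemma 3.1 of Grama–Neumann). -/
theorem hellinger_product_bound
    {Ω : Type*} [mΩ : MeasurableSpace Ω] (P : Measure Ω) [IsProbabilityMeasure P]
    (K : ℕ) (F : ℕ → MeasurableSpace Ω)
    (hF_mono : ∀ l, l ≤ K → F l ≤ F (l + 1))
    (hF_le : ∀ l, l ≤ K + 1 → F l ≤ mΩ)
    (L1 L2 : ℕ → Ω → ℝ)
    (hL1_nonneg : ∀ l, l ≤ K → ∀ ω, 0 ≤ L1 l ω)
    (hL2_nonneg : ∀ l, l ≤ K → ∀ ω, 0 ≤ L2 l ω)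
    (hL1_int : ∀ l, l ≤ K → Integrable (L1 l) P)
    (hL2_int : ∀ l, l ≤ K → Integrable (L2 l) P)
    (hL1_meas : ∀ l, l ≤ K → StronglyMeasurable[F (l + 1)] (L1 l))
    (hL2_meas : ∀ l, l ≤ K → StronglyMeasurable[F (l + 1)] (L2 l))
    (hL1_ce : ∀ l, l ≤ K → P[L1 l | F l] =ᵐ[P] fun _ => (1 : ℝ))
    (hL2_ce : ∀ l, l ≤ K → P[L2 l | F l] =ᵐ[P] fun _ => (1 : ℝ)) :
    ∫ ω, (Real.sqrt (∏ l ∈ Finset.range (K + 1), L1 l ω)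
          - Real.sqrt (∏ l ∈ Finset.range (K + 1), L2 l ω)) ^ 2 ∂P
      ≤ ∑ l ∈ Finset.range (K + 1),
          essSup (P[fun ω => (Real.sqrt (L1 l ω) - Real.sqrt (L2 l ω)) ^ 2 | F l]) P := by
  classical
  -- notation
  set ε : ℕ → ℝ := fun l =>
    essSup (P[fun ω => (Real.sqrt (L1 l ω) - Real.sqrt (L2 l ω)) ^ 2 | F l]) P with hε_def
  -- monotonicity of the filtration
  have hF_mono' : ∀ i j, i ≤ j → j ≤ K + 1 → F i ≤ F j := by
    intro i j hij hjK
    induction j with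
    | zero => obtain rfl := Nat.le_zero.mp hij; exact le_rfl
    | succ n ih =>
      rcases Nat.lt_or_ge i (n + 1) with h | h
      · exact (ih (Nat.lt_succ_iff.mp h) (by omega)).trans (hF_mono n (by omega))
      · have : i = n + 1 := le_antisymm hij h
        subst this; exact le_rfl
  -- basic facts about r l := sqrt (L1 l) * sqrt (L2 l)
  have hr0 : ∀ l ω, 0 ≤ Real.sqrt (L1 l ω) * Real.sqrt (L2 l ω) := fun l ω =>
    mul_nonneg (Real.sqrt_nonneg _) (Real.sqrt_nonneg _)
  have hr_le : ∀ l, l ≤ K → ∀ ω,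
      Real.sqrt (L1 l ω) * Real.sqrt (L2 l ω) ≤ (L1 l ω + L2 l ω) / 2 := by
    intro l hl ω
    nlinarith [sq_nonneg (Real.sqrt (L1 l ω) - Real.sqrt (L2 l ω)),
      Real.sq_sqrt (hL1_nonneg l hl ω), Real.sq_sqrt (hL2_nonneg l hl ω)]
  have hr_meas : ∀ l, l ≤ K →
      StronglyMeasurable[F (l + 1)] (fun ω => Real.sqrt (L1 l ω) * Real.sqrt (L2 l ω)) :=
    fun l hl =>
      (Real.continuous_sqrt.comp_stronglyMeasurable (hL1_meas l hl)).mul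
        (Real.continuous_sqrt.comp_stronglyMeasurable (hL2_meas l hl))
  have hhalf_int : ∀ l, l ≤ K → Integrable (fun ω => (L1 l ω + L2 l ω) / 2) P := fun l hl =>
    ((hL1_int l hl).add (hL2_int l hl)).div_const 2
  have hr_int : ∀ l, l ≤ K →
      Integrable (fun ω => Real.sqrt (L1 l ω) * Real.sqrt (L2 l ω)) P := by
    intro l hl
    refine (hhalf_int l hl).mono
      (((hr_meas l hl).mono (hF_le (l + 1) (by omega))).aestronglyMeasurable)
      (Filter.Eventually.of_forall fun ω => ?_)
    rw [Real.norm_eq_abs, Real.norm_eq_abs, abs_of_nonneg (hr0 l ω)]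
    exact (hr_le l hl ω).trans (le_abs_self _)
  have hg_eq : ∀ l, l ≤ K → ∀ ω,
      (Real.sqrt (L1 l ω) - Real.sqrt (L2 l ω)) ^ 2
        = L1 l ω + L2 l ω - 2 * (Real.sqrt (L1 l ω) * Real.sqrt (L2 l ω)) := by
    intro l hl ω
    rw [sub_sq, Real.sq_sqrt (hL1_nonneg l hl ω), Real.sq_sqrt (hL2_nonneg l hl ω)]
    ring
  have hg_int : ∀ l, l ≤ K →
      Integrable (fun ω => (Real.sqrt (L1 l ω) - Real.sqrt (L2 l ω)) ^ 2) P := by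
    intro l hl
    refine (((hL1_int l hl).add (hL2_int l hl)).sub ((hr_int l hl).const_mul 2)).congr
      (Filter.Eventually.of_forall fun ω => ?_)
    exact (hg_eq l hl ω).symm
  -- conditional expectation of (L1+L2)/2 is 1
  have hsum_ce : ∀ l, l ≤ K →
      P[fun ω => (L1 l ω + L2 l ω) / 2 | F l] =ᵐ[P] fun _ => (1 : ℝ) := by
    intro l hl
    have heq : (fun ω => (L1 l ω + L2 l ω) / 2) = (2⁻¹ : ℝ) • (L1 l + L2 l) := by
      funext ω; simp [Pi.smul_apply, Pi.add_apply, smul_eq_mul]; ring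
    have hadd : P[L1 l + L2 l|F l] =ᵐ[P] P[L1 l|F l] + P[L2 l|F l] :=
      condExp_add (hL1_int l hl) (hL2_int l hl) _
    have hsmul : P[(2⁻¹ : ℝ) • (L1 l + L2 l)|F l] =ᵐ[P] (2⁻¹ : ℝ) • P[L1 l + L2 l|F l] :=
      condExp_smul (2⁻¹ : ℝ) (L1 l + L2 l) _
    rw [heq]
    refine hsmul.trans ?_
    filter_upwards [hadd, hL1_ce l hl, hL2_ce l hl] with ω h1 h2 h3
    simp only [Pi.smul_apply, Pi.add_apply, smul_eq_mul] at h1 h2 h3 ⊢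
    rw [h1, h2, h3]; norm_num
  -- conditional expectation of r is ≤ 1 and ≥ 0
  have hcr_le_one : ∀ l, l ≤ K →
      P[fun ω => Real.sqrt (L1 l ω) * Real.sqrt (L2 l ω)|F l] ≤ᵐ[P] fun _ => (1 : ℝ) := by
    intro l hl
    have h1 := condExp_mono (μ := P) (m := F l) (hr_int l hl) (hhalf_int l hl)
      (Filter.Eventually.of_forall (hr_le l hl))
    filter_upwards [h1, hsum_ce l hl] with ω hω h2
    rw [← h2]; exact hω
  have hcr_nonneg : ∀ l, l ≤ K →
      (fun _ => (0 : ℝ)) ≤ᵐ[P] P[fun ω => Real.sqrt (L1 l ω) * Real.sqrt (L2 l ω)|F l] :=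
    fun l hl => condExp_nonneg (Filter.Eventually.of_forall (hr0 l))
  -- conditional expectation of g in terms of r
  have hce_g : ∀ l, l ≤ K →
      P[fun ω => (Real.sqrt (L1 l ω) - Real.sqrt (L2 l ω)) ^ 2|F l] =ᵐ[P]
        fun ω => 2 - 2 * (P[fun ω => Real.sqrt (L1 l ω) * Real.sqrt (L2 l ω)|F l]) ω := by
    intro l hl
    have heq : (fun ω => (Real.sqrt (L1 l ω) - Real.sqrt (L2 l ω)) ^ 2)
        = (L1 l + L2 l) - (2 : ℝ) • (fun ω => Real.sqrt (L1 l ω) * Real.sqrt (L2 l ω)) := by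
      funext ω
      simp only [Pi.sub_apply, Pi.add_apply, Pi.smul_apply, smul_eq_mul]
      exact hg_eq l hl ω
    have hadd : P[L1 l + L2 l|F l] =ᵐ[P] P[L1 l|F l] + P[L2 l|F l] :=
      condExp_add (hL1_int l hl) (hL2_int l hl) _
    have hsmul : P[(2 : ℝ) • (fun ω => Real.sqrt (L1 l ω) * Real.sqrt (L2 l ω))|F l] =ᵐ[P]
        (2 : ℝ) • P[fun ω => Real.sqrt (L1 l ω) * Real.sqrt (L2 l ω)|F l] :=
      condExp_smul (2 : ℝ) _ _
    have hsub : P[(L1 l + L2 l) - (2 : ℝ) • (fun ω => Real.sqrt (L1 l ω) * Real.sqrt (L2 l ω))|F l]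
        =ᵐ[P] P[L1 l + L2 l|F l]
          - P[(2 : ℝ) • (fun ω => Real.sqrt (L1 l ω) * Real.sqrt (L2 l ω))|F l] :=
      condExp_sub ((hL1_int l hl).add (hL2_int l hl))
        (((hr_int l hl).const_mul 2).congr (Filter.Eventually.of_forall fun ω => by
          simp [Pi.smul_apply, smul_eq_mul])) _
    rw [heq]
    refine hsub.trans ?_
    filter_upwards [hadd, hsmul, hL1_ce l hl, hL2_ce l hl] with ω h1 h2 h3 h4
    simp only [Pi.sub_apply, Pi.add_apply, Pi.smul_apply, smul_eq_mul] at h1 h2 h3 h4 ⊢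
    rw [h1, h2, h3, h4]; ring
  -- boundedness and the essSup bounds
  have hbdd : ∀ l, l ≤ K →
      P[fun ω => (Real.sqrt (L1 l ω) - Real.sqrt (L2 l ω)) ^ 2|F l] ≤ᵐ[P]
        fun _ => (2 : ℝ) := by
    intro l hl
    filter_upwards [hce_g l hl, hcr_nonneg l hl] with ω h1 h2
    rw [h1]; linarith
  have hgle : ∀ l, l ≤ K →
      P[fun ω => (Real.sqrt (L1 l ω) - Real.sqrt (L2 l ω)) ^ 2|F l] ≤ᵐ[P]
        fun _ => ε l := by
    intro l hl
    exact ae_le_essSup ⟨2, Filter.eventually_map.2 (hbdd l hl)⟩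
  have hε0 : ∀ l, l ≤ K → 0 ≤ ε l := by
    intro l hl
    have h0 : (fun _ => (0 : ℝ)) ≤ᵐ[P]
        P[fun ω => (Real.sqrt (L1 l ω) - Real.sqrt (L2 l ω)) ^ 2|F l] :=
      condExp_nonneg (Filter.Eventually.of_forall fun ω => sq_nonneg _)
    obtain ⟨ω, h1, h2⟩ := (h0.and (hgle l hl)).exists
    exact le_trans h1 h2
  have hr_lb : ∀ l, l ≤ K →
      (fun _ => 1 - ε l / 2) ≤ᵐ[P]
        P[fun ω => Real.sqrt (L1 l ω) * Real.sqrt (L2 l ω)|F l] := by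
    intro l hl
    filter_upwards [hce_g l hl, hgle l hl] with ω h1 h2
    rw [h1] at h2
    linarith
  -- measurability of partial products
  have hA_meas : ∀ k, k ≤ K + 1 →
      StronglyMeasurable[F k] (fun ω => ∏ l ∈ Finset.range k, L1 l ω) := by
    intro k hk
    exact Finset.stronglyMeasurable_fun_prod _ fun l hl =>
      (hL1_meas l (by have := Finset.mem_range.mp hl; omega)).mono
        (hF_mono' (l + 1) k (by have := Finset.mem_range.mp hl; omega) hk)
  have hB_meas : ∀ k, k ≤ K + 1 →
      StronglyMeasurable[F k] (fun ω => ∏ l ∈ Finset.range k, L2 l ω) := by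
    intro k hk
    exact Finset.stronglyMeasurable_fun_prod _ fun l hl =>
      (hL2_meas l (by have := Finset.mem_range.mp hl; omega)).mono
        (hF_mono' (l + 1) k (by have := Finset.mem_range.mp hl; omega) hk)
  have hS_meas : ∀ k, k ≤ K + 1 →
      StronglyMeasurable[F k]
        (fun ω => ∏ l ∈ Finset.range k, (Real.sqrt (L1 l ω) * Real.sqrt (L2 l ω))) := by
    intro k hk
    exact Finset.stronglyMeasurable_fun_prod _ fun l hl =>
      (hr_meas l (by have := Finset.mem_range.mp hl; omega)).mono
        (hF_mono' (l + 1) k (by have := Finset.mem_range.mp hl; omega) hk)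
  have hA0 : ∀ k, k ≤ K + 1 → ∀ ω, 0 ≤ ∏ l ∈ Finset.range k, L1 l ω := by
    intro k hk ω
    exact Finset.prod_nonneg fun l hl =>
      hL1_nonneg l (by have := Finset.mem_range.mp hl; omega) ω
  have hB0 : ∀ k, k ≤ K + 1 → ∀ ω, 0 ≤ ∏ l ∈ Finset.range k, L2 l ω := by
    intro k hk ω
    exact Finset.prod_nonneg fun l hl =>
      hL2_nonneg l (by have := Finset.mem_range.mp hl; omega) ω
  have hS0 : ∀ k ω, 0 ≤ ∏ l ∈ Finset.range k, (Real.sqrt (L1 l ω) * Real.sqrt (L2 l ω)) :=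
    fun k ω => Finset.prod_nonneg fun l _ => hr0 l ω
  -- the main induction
  have main : ∀ k, k ≤ K + 1 →
      (Integrable (fun ω => ∏ l ∈ Finset.range k, L1 l ω) P ∧
        ∫ ω, ∏ l ∈ Finset.range k, L1 l ω ∂P = 1) ∧
      (Integrable (fun ω => ∏ l ∈ Finset.range k, L2 l ω) P ∧
        ∫ ω, ∏ l ∈ Finset.range k, L2 l ω ∂P = 1) ∧
      (Integrable (fun ω => ∏ l ∈ Finset.range k, (Real.sqrt (L1 l ω) * Real.sqrt (L2 l ω))) P ∧
        ∫ ω, ∏ l ∈ Finset.range k, (Real.sqrt (L1 l ω) * Real.sqrt (L2 l ω)) ∂P ≤ 1 ∧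
        2 - 2 * ∫ ω, ∏ l ∈ Finset.range k, (Real.sqrt (L1 l ω) * Real.sqrt (L2 l ω)) ∂P
          ≤ ∑ l ∈ Finset.range k, ε l) := by
    intro k
    induction k with
    | zero =>
      intro _
      simp only [Finset.range_zero, Finset.prod_empty, Finset.sum_empty]
      refine ⟨⟨integrable_const 1, ?_⟩, ⟨integrable_const 1, ?_⟩,
        integrable_const 1, ?_, ?_⟩ <;> simp [integral_const]
    | succ k ih =>
      intro hk1
      have hk : k ≤ K := by omega
      obtain ⟨⟨hA_int, hA_val⟩, ⟨hB_int, hB_val⟩, hS_int, hS_le, hS_sum⟩ := ih (by omega)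
      have hmk : F k ≤ mΩ := hF_le k (by omega)
      -- L1 product
      have hA' := my_mul_le hmk (hA0 k (by omega)) (hA_meas k (by omega)) hA_int
        (hL1_nonneg k hk) (hL1_int k hk) ((hL1_ce k hk).le)
      have hA'' := my_mul_ge hmk (hA0 k (by omega)) (hA_meas k (by omega)) hA_int
        (hL1_int k hk) hA'.1 ((hL1_ce k hk).symm.le)
      have hB' := my_mul_le hmk (hB0 k (by omega)) (hB_meas k (by omega)) hB_int
        (hL2_nonneg k hk) (hL2_int k hk) ((hL2_ce k hk).le)
      have hB'' := my_mul_ge hmk (hB0 k (by omega)) (hB_meas k (by omega)) hB_int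
        (hL2_int k hk) hB'.1 ((hL2_ce k hk).symm.le)
      have hS' := my_mul_le hmk (fun ω => hS0 k ω) (hS_meas k (by omega)) hS_int
        (hr0 k) (hr_int k hk) (hcr_le_one k hk)
      have hS'' := my_mul_ge hmk (fun ω => hS0 k ω) (hS_meas k (by omega)) hS_int
        (hr_int k hk) hS'.1 (hr_lb k hk)
      have hSnn : 0 ≤ ∫ ω, ∏ l ∈ Finset.range k,
          (Real.sqrt (L1 l ω) * Real.sqrt (L2 l ω)) ∂P :=
        integral_nonneg fun ω => hS0 k ω
      -- rewrite products over range (k+1)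
      simp only [Finset.prod_range_succ, Finset.sum_range_succ]
      refine ⟨⟨hA'.1, ?_⟩, ⟨hB'.1, ?_⟩, hS'.1, ?_, ?_⟩
      · have h1 := hA'.2; have h2 := hA''
        rw [hA_val] at h1 h2
        linarith
      · have h1 := hB'.2; have h2 := hB''
        rw [hB_val] at h1 h2
        linarith
      · calc ∫ ω, (∏ l ∈ Finset.range k, (Real.sqrt (L1 l ω) * Real.sqrt (L2 l ω)))
              * (Real.sqrt (L1 k ω) * Real.sqrt (L2 k ω)) ∂P
            ≤ 1 * ∫ ω, ∏ l ∈ Finset.range k,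
              (Real.sqrt (L1 l ω) * Real.sqrt (L2 l ω)) ∂P := hS'.2
          _ ≤ 1 := by rw [one_mul]; exact hS_le
      · have h1 := hS''
        have h2 := hS'.2
        rw [one_mul] at h2
        have hε := hε0 k hk
        nlinarith [hSnn, hS_le, hS_sum]
  obtain ⟨⟨hA_int, hA_val⟩, ⟨hB_int, hB_val⟩, hS_int, hS_le, hS_sum⟩ := main (K + 1) le_rfl
  -- pointwise identity
  have hpt : ∀ ω, (Real.sqrt (∏ l ∈ Finset.range (K + 1), L1 l ω)
      - Real.sqrt (∏ l ∈ Finset.range (K + 1), L2 l ω)) ^ 2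
      = (∏ l ∈ Finset.range (K + 1), L1 l ω) + (∏ l ∈ Finset.range (K + 1), L2 l ω)
        - 2 * ∏ l ∈ Finset.range (K + 1), (Real.sqrt (L1 l ω) * Real.sqrt (L2 l ω)) := by
    intro ω
    have ha := hA0 (K + 1) le_rfl ω
    have hb := hB0 (K + 1) le_rfl ω
    rw [sub_sq, Real.sq_sqrt ha, Real.sq_sqrt hb,
      my_sqrt_prod _ _ (fun l hl => hL1_nonneg l (by have := Finset.mem_range.mp hl; omega) ω),
      my_sqrt_prod _ _ (fun l hl => hL2_nonneg l (by have := Finset.mem_range.mp hl; omega) ω),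
      Finset.prod_mul_distrib]
    ring
  calc ∫ ω, (Real.sqrt (∏ l ∈ Finset.range (K + 1), L1 l ω)
        - Real.sqrt (∏ l ∈ Finset.range (K + 1), L2 l ω)) ^ 2 ∂P
      = ∫ ω, ((∏ l ∈ Finset.range (K + 1), L1 l ω) + (∏ l ∈ Finset.range (K + 1), L2 l ω)
        - 2 * ∏ l ∈ Finset.range (K + 1), (Real.sqrt (L1 l ω) * Real.sqrt (L2 l ω))) ∂P :=
        integral_congr_ae (Filter.Eventually.of_forall hpt)
    _ = (∫ ω, ((∏ l ∈ Finset.range (K + 1), L1 l ω)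
          + (∏ l ∈ Finset.range (K + 1), L2 l ω)) ∂P)
        - ∫ ω, 2 * ∏ l ∈ Finset.range (K + 1),
          (Real.sqrt (L1 l ω) * Real.sqrt (L2 l ω)) ∂P :=
        integral_sub (hA_int.add hB_int) (hS_int.const_mul 2)
    _ = (∫ ω, ∏ l ∈ Finset.range (K + 1), L1 l ω ∂P)
        + (∫ ω, ∏ l ∈ Finset.range (K + 1), L2 l ω ∂P)
        - 2 * ∫ ω, ∏ l ∈ Finset.range (K + 1),
          (Real.sqrt (L1 l ω) * Real.sqrt (L2 l ω)) ∂P := by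
        rw [integral_add hA_int hB_int, integral_const_mul]
    _ = 2 - 2 * ∫ ω, ∏ l ∈ Finset.range (K + 1),
          (Real.sqrt (L1 l ω) * Real.sqrt (L2 l ω)) ∂P := by
        rw [hA_val, hB_val]; ring
    _ ≤ ∑ l ∈ Finset.range (K + 1), ε l := hS_sum
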